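/- Let α be strictly increasing with α_n > 1, α_n → ∞, and lim_{n→∞} (log n)/α_n = 0 (i.e. Λ₀(α) is nuclear). Then σ(C; Λ₀(α)) = σ_pt(C; Λ₀(α)) = Σ = {1/m : m ≥ 1}; that is, every λ ∈ ℂ \ {1/m : m ≥ 1} is such that λI − C is bijective on Λ₀(α) with continuous inverse, and each 1/m is an eigenvalue of C on Λ₀(α). -/

import Mathlib

open Filter Finset Topology

noncomputable section

/-- The weight `w_k(n) = e^{-alpha_n / k}`.  Indices are shifted by one: the natural
numbers `k n : Nat` represent the indices `k+1` and `n+1` (both running from `1`). -/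
def wt (a : ℕ → ℝ) (k n : ℕ) : ℝ := Real.exp (-(a n) / ((k : ℝ) + 1))

/-- Membership in the power series space of finite type `Λ₀(α)`:
`x ∈ Λ₀(α)` iff `w_k(n)|x_n| → 0` for every `k ≥ 1`. -/
def memLambda (a : ℕ → ℝ) (x : ℕ → ℂ) : Prop :=
  ∀ k : ℕ, Tendsto (fun n => wt a k n * ‖x n‖) atTop (𝓝 0)

/-- The norm `p_k(x) = sup_n w_k(n)|x_n|` generating the Fréchet topology of `Λ₀(α)`. -/
def pk (a : ℕ → ℝ) (k : ℕ) (x : ℕ → ℂ) : ℝ := ⨆ n : ℕ, wt a k n * ‖x n‖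

/-- The discrete Cesàro operator `(C x)_n = (x_1 + ⋯ + x_n)/n` (0-indexed). -/
def cesaro (x : ℕ → ℂ) : ℕ → ℂ := fun n => (∑ i ∈ Finset.range (n + 1), x i) / ((n : ℂ) + 1)

/-- `lam` is an eigenvalue of the Cesàro operator on `Λ₀(α)`. -/
def IsEigen (a : ℕ → ℝ) (lam : ℂ) : Prop :=
  ∃ x : ℕ → ℂ, memLambda a x ∧ x ≠ 0 ∧ cesaro x = lam • x

/-- `lam` belongs to the resolvent set of the Cesàro operator on `Λ₀(α)`:
`lam • I - C` has a linear inverse `T` on `Λ₀(α)` which is continuous for the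
Fréchet topology generated by the norms `p_k`. -/
def InResolvent (a : ℕ → ℝ) (lam : ℂ) : Prop :=
  ∃ T : (ℕ → ℂ) → (ℕ → ℂ),
    (∀ x, memLambda a x → memLambda a (T x)) ∧
    (∀ x y, memLambda a x → memLambda a y → T (x + y) = T x + T y) ∧
    (∀ (c : ℂ) (x), memLambda a x → T (c • x) = c • T x) ∧
    (∀ k : ℕ, ∃ l : ℕ, ∃ M : ℝ, 0 < M ∧ ∀ x, memLambda a x → pk a k (T x) ≤ M * pk a l x) ∧
    (∀ x, memLambda a x → T (lam • x - cesaro x) = x) ∧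
    (∀ x, memLambda a x → lam • T x - cesaro (T x) = x)

/-! ### Auxiliary material -/

namespace Stmt8Aux

/-! #### Basic facts about `wt` and `pk` -/

lemma wt_pos (a : ℕ → ℝ) (k n : ℕ) : 0 < wt a k n := Real.exp_pos _

lemma bddAboveRange {a : ℕ → ℝ} {y : ℕ → ℂ} (hy : memLambda a y) (l : ℕ) :
    BddAbove (Set.range fun n => wt a l n * ‖y n‖) :=
  (hy l).bddAbove_range

lemma le_pk {a : ℕ → ℝ} {y : ℕ → ℂ} (hy : memLambda a y) (l n : ℕ) :
    wt a l n * ‖y n‖ ≤ pk a l y :=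
  le_ciSup (bddAboveRange hy l) n

lemma pk_nonneg {a : ℕ → ℝ} {y : ℕ → ℂ} (hy : memLambda a y) (l : ℕ) : 0 ≤ pk a l y :=
  le_trans (mul_nonneg (wt_pos a l 0).le (norm_nonneg _)) (le_pk hy l 0)

lemma abs_le_exp_mul_pk {a : ℕ → ℝ} {y : ℕ → ℂ} (hy : memLambda a y) (l n : ℕ) :
    ‖y n‖ ≤ Real.exp (a n / ((l : ℝ) + 1)) * pk a l y := by
  have h := le_pk hy l n
  calc ‖y n‖
      = Real.exp (a n / ((l : ℝ) + 1)) * (wt a l n * ‖y n‖) := by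
        rw [wt, ← mul_assoc, ← Real.exp_add]
        rw [show a n / ((l : ℝ) + 1) + -(a n) / ((l : ℝ) + 1) = 0 by ring, Real.exp_zero, one_mul]
    _ ≤ Real.exp (a n / ((l : ℝ) + 1)) * pk a l y := by
        exact mul_le_mul_of_nonneg_left h (Real.exp_pos _).le

/-! #### Nuclearity consequences -/

section Nuclear

variable {a : ℕ → ℝ} (h1 : ∀ n, 1 < a n) (htop : Tendsto a atTop atTop)
  (hnuc : Tendsto (fun n : ℕ => Real.log ((n : ℝ) + 1) / a n) atTop (𝓝 0))

include h1 htop hnuc in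
lemma exp_term_tendsto (β c : ℝ) (hc : 0 < c) :
    Tendsto (fun n : ℕ => Real.exp (β * Real.log ((n : ℝ) + 1) - c * a n)) atTop (𝓝 0) := by
  have hpos : ∀ n, (0 : ℝ) < a n := fun n => lt_trans one_pos (h1 n)
  have h1' : Tendsto (fun n : ℕ => β * (Real.log ((n : ℝ) + 1) / a n)) atTop (𝓝 0) := by
    simpa using hnuc.const_mul β
  have hev : ∀ᶠ n : ℕ in atTop, β * Real.log ((n : ℝ) + 1) - c * a n ≤ -(c / 2) * a n := by
    filter_upwards [h1'.eventually (eventually_le_nhds (by positivity : (0:ℝ) < c / 2))] with n hn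
    have hne : a n ≠ 0 := (hpos n).ne'
    have hβ : β * Real.log ((n : ℝ) + 1) ≤ c / 2 * a n := by
      have e : β * Real.log ((n : ℝ) + 1) = β * (Real.log ((n : ℝ) + 1) / a n) * a n := by
        field_simp
      rw [e]
      exact mul_le_mul_of_nonneg_right hn (hpos n).le
    linarith
  have hbot : Tendsto (fun n : ℕ => -(c / 2) * a n) atTop atBot :=
    (tendsto_const_mul_atBot_of_neg (by linarith)).2 htop
  have hbot' : Tendsto (fun n : ℕ => β * Real.log ((n : ℝ) + 1) - c * a n) atTop atBot :=
    tendsto_atBot_mono' atTop hev hbot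
  exact Real.tendsto_exp_atBot.comp hbot'

include h1 htop hnuc in
lemma exp_term_bound (β c : ℝ) (hc : 0 < c) :
    ∃ M : ℝ, 1 ≤ M ∧ ∀ n : ℕ, Real.exp (β * Real.log ((n : ℝ) + 1) - c * a n) ≤ M := by
  obtain ⟨M0, hM0⟩ := (exp_term_tendsto h1 htop hnuc β c hc).bddAbove_range
  refine ⟨max M0 1, le_max_right _ _, fun n => ?_⟩
  exact le_trans (hM0 (Set.mem_range_self n)) (le_max_left _ _)

end Nuclear

/-! #### The formal inverse of `lam • I - C` -/

variable (lam : ℂ)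

def S (lam : ℂ) (y : ℕ → ℂ) : ℕ → ℂ
  | 0 => y 0 / (lam - 1)
  | n + 1 => (lam * ((n : ℂ) + 2) * S lam y n + ((n : ℂ) + 2) * y (n + 1)) /
      (lam * ((n : ℂ) + 2) - 1)

def Tr (lam : ℂ) (y : ℕ → ℂ) : ℕ → ℂ
  | 0 => S lam y 0
  | n + 1 => S lam y (n + 1) - S lam y n

lemma S_add (x y : ℕ → ℂ) : ∀ n, S lam (x + y) n = S lam x n + S lam y n
  | 0 => by simp only [S, Pi.add_apply]; ring
  | n + 1 => by simp only [S, Pi.add_apply, S_add x y n]; ring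

lemma S_smul (c : ℂ) (y : ℕ → ℂ) : ∀ n, S lam (c • y) n = c * S lam y n
  | 0 => by simp only [S, Pi.smul_apply, smul_eq_mul]; ring
  | n + 1 => by simp only [S, Pi.smul_apply, smul_eq_mul, S_smul c y n]; ring

lemma Tr_add (x y : ℕ → ℂ) : Tr lam (x + y) = Tr lam x + Tr lam y := by
  funext n
  cases n with
  | zero => simp [Tr, S_add]
  | succ n => simp only [Tr, S_add, Pi.add_apply]; ring

lemma Tr_smul (c : ℂ) (y : ℕ → ℂ) : Tr lam (c • y) = c • Tr lam y := by
  funext n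
  cases n with
  | zero => simp [Tr, S_smul]
  | succ n => simp only [Tr, S_smul, Pi.smul_apply, smul_eq_mul]; ring

lemma sum_Tr (y : ℕ → ℂ) : ∀ n, ∑ i ∈ range (n + 1), Tr lam y i = S lam y n
  | 0 => by simp [Tr]
  | n + 1 => by
      rw [sum_range_succ, sum_Tr y n]
      show S lam y n + (S lam y (n + 1) - S lam y n) = S lam y (n + 1)
      ring

section WithHs

variable {lam : ℂ}

lemma dne (hs : ∀ n : ℕ, lam * ((n : ℂ) + 1) ≠ 1) (n : ℕ) :
    lam * ((n : ℂ) + 1) - 1 ≠ 0 := sub_ne_zero.mpr (hs n)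

lemma dne2 (hs : ∀ n : ℕ, lam * ((n : ℂ) + 1) ≠ 1) (n : ℕ) :
    lam * ((n : ℂ) + 2) - 1 ≠ 0 := by
  have h := dne hs (n + 1)
  rwa [show (((n + 1 : ℕ)) : ℂ) + 1 = (n : ℂ) + 2 by push_cast; ring] at h

lemma lam_sub_one_ne (hs : ∀ n : ℕ, lam * ((n : ℂ) + 1) ≠ 1) : lam - 1 ≠ 0 := by
  have h := dne hs 0
  simpa using h

lemma cast_two_ne (n : ℕ) : ((n : ℂ) + 2) ≠ 0 := by
  intro h
  have := Nat.cast_add_one_ne_zero (R := ℂ) (n + 1)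
  push_cast at this
  exact this (by linear_combination h)

lemma Tr_right_inverse (hs : ∀ n : ℕ, lam * ((n : ℂ) + 1) ≠ 1) (y : ℕ → ℂ) :
    lam • Tr lam y - cesaro (Tr lam y) = y := by
  funext n
  simp only [Pi.sub_apply, Pi.smul_apply, smul_eq_mul, cesaro, sum_Tr]
  cases n with
  | zero =>
      rw [show Tr lam y 0 = y 0 / (lam - 1) from rfl, show S lam y 0 = y 0 / (lam - 1) from rfl]
      push_cast
      field_simp [lam_sub_one_ne hs]
      ring
  | succ n =>
      rw [show Tr lam y (n + 1) = S lam y (n + 1) - S lam y n from rfl]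
      rw [show S lam y (n + 1) =
        (lam * ((n : ℂ) + 2) * S lam y n + ((n : ℂ) + 2) * y (n + 1)) /
          (lam * ((n : ℂ) + 2) - 1) from rfl]
      have hd := dne2 hs n
      have hc := cast_two_ne n
      rw [show (((n + 1 : ℕ)) : ℂ) + 1 = (n : ℂ) + 2 by push_cast; ring]
      field_simp
      ring

lemma S_of_image (hs : ∀ n : ℕ, lam * ((n : ℂ) + 1) ≠ 1) (x : ℕ → ℂ) :
    ∀ n, S lam (lam • x - cesaro x) n = ∑ i ∈ range (n + 1), x i := by
  intro n
  induction n with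
  | zero =>
      show (lam • x - cesaro x) 0 / (lam - 1) = ∑ i ∈ range (0 + 1), x i
      simp only [Pi.sub_apply, Pi.smul_apply, smul_eq_mul, cesaro, sum_range_one,
        Nat.cast_zero, zero_add]
      field_simp [lam_sub_one_ne hs]
  | succ n ih =>
      show (lam * ((n : ℂ) + 2) * S lam (lam • x - cesaro x) n +
          ((n : ℂ) + 2) * (lam • x - cesaro x) (n + 1)) /
          (lam * ((n : ℂ) + 2) - 1) = ∑ i ∈ range (n + 1 + 1), x i
      rw [ih]
      simp only [Pi.sub_apply, Pi.smul_apply, smul_eq_mul, cesaro]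
      rw [sum_range_succ (f := x) (n := n + 1)]
      have hd := dne2 hs n
      have hc := cast_two_ne n
      rw [show (((n + 1 : ℕ)) : ℂ) + 1 = (n : ℂ) + 2 by push_cast; ring]
      field_simp
      ring

lemma Tr_left_inverse (hs : ∀ n : ℕ, lam * ((n : ℂ) + 1) ≠ 1) (x : ℕ → ℂ) :
    Tr lam (lam • x - cesaro x) = x := by
  funext n
  cases n with
  | zero =>
      show S lam (lam • x - cesaro x) 0 = x 0
      rw [S_of_image hs x 0, sum_range_one]
  | succ n =>
      show S lam (lam • x - cesaro x) (n + 1) - S lam (lam • x - cesaro x) n = x (n + 1)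
      rw [S_of_image hs x (n + 1), S_of_image hs x n, sum_range_succ]
      ring

end WithHs

/-! #### Quantitative bounds -/

def rfac (lam : ℂ) (j : ℕ) : ℝ :=
  max (‖lam * ((j : ℂ) + 2) / (lam * ((j : ℂ) + 2) - 1)‖) 1

def G (lam : ℂ) (n : ℕ) : ℝ := ∏ j ∈ range n, rfac lam j

lemma one_le_rfac (lam : ℂ) (j : ℕ) : 1 ≤ rfac lam j := le_max_right _ _

lemma rfac_nonneg (lam : ℂ) (j : ℕ) : 0 ≤ rfac lam j :=
  le_trans zero_le_one (one_le_rfac lam j)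

lemma G_succ (lam : ℂ) (n : ℕ) : G lam (n + 1) = G lam n * rfac lam n :=
  prod_range_succ _ _

lemma one_le_G (lam : ℂ) : ∀ n, 1 ≤ G lam n
  | 0 => le_of_eq (by rw [G, range_zero, prod_empty])
  | n + 1 => by
      rw [G_succ]
      have h1 := one_le_G lam n
      have h2 := one_le_rfac lam n
      nlinarith

lemma G_nonneg (lam : ℂ) (n : ℕ) : 0 ≤ G lam n :=
  le_trans zero_le_one (one_le_G lam n)

lemma G_mono (lam : ℂ) (n : ℕ) : G lam n ≤ G lam (n + 1) := by
  rw [G_succ]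
  exact le_mul_of_one_le_right (G_nonneg lam n) (one_le_rfac lam n)

lemma G_le_G (lam : ℂ) {m n : ℕ} (h : m ≤ n) : G lam m ≤ G lam n := by
  induction n, h using Nat.le_induction with
  | base => exact le_rfl
  | succ n hmn ih => exact le_trans ih (G_mono lam n)

/-- The weighted sum controlling `S`. -/
def Sig (lam : ℂ) (y : ℕ → ℂ) (n : ℕ) : ℝ :=
  ∑ i ∈ range (n + 1), ((i : ℝ) + 1) / ‖lam * ((i : ℂ) + 1) - 1‖ * ‖y i‖

lemma Sig_nonneg (lam : ℂ) (y : ℕ → ℂ) (n : ℕ) : 0 ≤ Sig lam y n :=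
  Finset.sum_nonneg fun i _ => by positivity

lemma Sig_succ (lam : ℂ) (y : ℕ → ℂ) (n : ℕ) :
    Sig lam y (n + 1) = Sig lam y n +
      ((n : ℝ) + 2) / ‖lam * ((n : ℂ) + 2) - 1‖ * ‖y (n + 1)‖ := by
  rw [Sig, Sig]
  rw [show ((n : ℝ) + 2) = (((n + 1 : ℕ)) : ℝ) + 1 by push_cast; ring,
    show ((n : ℂ) + 2) = (((n + 1 : ℕ)) : ℂ) + 1 by push_cast; ring]
  exact sum_range_succ _ (n + 1)

lemma Sig_mono (lam : ℂ) (y : ℕ → ℂ) (n : ℕ) : Sig lam y n ≤ Sig lam y (n + 1) := by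
  rw [Sig_succ]
  exact le_add_of_nonneg_right (by positivity)

lemma abs_coe_add_two (n : ℕ) : ‖(n : ℂ) + 2‖ = (n : ℝ) + 2 := by
  rw [show ((n : ℂ) + 2) = (((n + 2 : ℕ)) : ℂ) by push_cast; ring, Complex.norm_natCast]
  push_cast; ring

lemma S_bound (lam : ℂ) (y : ℕ → ℂ) :
    ∀ n, ‖S lam y n‖ ≤ G lam n * Sig lam y n
  | 0 => by
      have h0 : S lam y 0 = y 0 / (lam - 1) := rfl
      have hG0 : G lam 0 = 1 := by rw [G, range_zero, prod_empty]
      have hS0 : Sig lam y 0 = 1 / ‖lam - 1‖ * ‖y 0‖ := by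
        rw [Sig]
        rw [show (0 : ℕ) + 1 = 1 from rfl, sum_range_one]
        norm_num
      rw [h0, hG0, hS0, norm_div, one_mul, one_div, div_eq_mul_inv, mul_comm]
  | n + 1 => by
      have ih := S_bound lam y n
      have hG1 : (1:ℝ) ≤ G lam (n + 1) := one_le_G lam (n + 1)
      have key : ‖S lam y (n + 1)‖ ≤
          rfac lam n * ‖S lam y n‖ +
            ((n : ℝ) + 2) / ‖lam * ((n : ℂ) + 2) - 1‖ * ‖y (n + 1)‖ := by
        show ‖(lam * ((n : ℂ) + 2) * S lam y n + ((n : ℂ) + 2) * y (n + 1)) /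
          (lam * ((n : ℂ) + 2) - 1)‖ ≤ _
        rw [norm_div]
        rcases eq_or_ne (‖lam * ((n : ℂ) + 2) - 1‖) 0 with hz | hz
        · rw [hz]
          simp only [div_zero, zero_mul, add_zero]
          exact mul_nonneg (rfac_nonneg lam n) (norm_nonneg _)
        have hzpos : 0 < ‖lam * ((n : ℂ) + 2) - 1‖ :=
          lt_of_le_of_ne (norm_nonneg _) (Ne.symm hz)
        rw [div_le_iff₀ hzpos]
        calc ‖lam * ((n : ℂ) + 2) * S lam y n + ((n : ℂ) + 2) * y (n + 1)‖
            ≤ ‖lam * ((n : ℂ) + 2) * S lam y n‖ +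
              ‖((n : ℂ) + 2) * y (n + 1)‖ := norm_add_le _ _
          _ = ‖lam * ((n : ℂ) + 2)‖ * ‖S lam y n‖ +
              ((n : ℝ) + 2) * ‖y (n + 1)‖ := by
              rw [norm_mul (lam * ((n : ℂ) + 2)) (S lam y n),
                norm_mul ((n : ℂ) + 2) (y (n + 1)), abs_coe_add_two]
          _ ≤ (rfac lam n * ‖lam * ((n : ℂ) + 2) - 1‖) * ‖S lam y n‖ +
              (((n : ℝ) + 2) / ‖lam * ((n : ℂ) + 2) - 1‖ *
                ‖lam * ((n : ℂ) + 2) - 1‖) * ‖y (n + 1)‖ := by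
              have hr : ‖lam * ((n : ℂ) + 2)‖ ≤
                  rfac lam n * ‖lam * ((n : ℂ) + 2) - 1‖ := by
                have hle : ‖lam * ((n : ℂ) + 2)‖ /
                    ‖lam * ((n : ℂ) + 2) - 1‖ ≤ rfac lam n := by
                  rw [rfac, norm_div]
                  exact le_max_left _ _
                calc ‖lam * ((n : ℂ) + 2)‖
                    = ‖lam * ((n : ℂ) + 2)‖ / ‖lam * ((n : ℂ) + 2) - 1‖ *
                      ‖lam * ((n : ℂ) + 2) - 1‖ := by field_simp
                  _ ≤ rfac lam n * ‖lam * ((n : ℂ) + 2) - 1‖ :=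
                      mul_le_mul_of_nonneg_right hle hzpos.le
              have h2 : ((n : ℝ) + 2) = ((n : ℝ) + 2) / ‖lam * ((n : ℂ) + 2) - 1‖ *
                  ‖lam * ((n : ℂ) + 2) - 1‖ := by field_simp
              rw [← h2]
              exact add_le_add (mul_le_mul_of_nonneg_right hr (norm_nonneg _)) le_rfl
          _ = (rfac lam n * ‖S lam y n‖ +
              ((n : ℝ) + 2) / ‖lam * ((n : ℂ) + 2) - 1‖ * ‖y (n + 1)‖) *
              ‖lam * ((n : ℂ) + 2) - 1‖ := by ring
      calc ‖S lam y (n + 1)‖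
          ≤ rfac lam n * ‖S lam y n‖ +
            ((n : ℝ) + 2) / ‖lam * ((n : ℂ) + 2) - 1‖ * ‖y (n + 1)‖ := key
        _ ≤ rfac lam n * (G lam n * Sig lam y n) +
            ((n : ℝ) + 2) / ‖lam * ((n : ℂ) + 2) - 1‖ * ‖y (n + 1)‖ := by
            exact add_le_add (mul_le_mul_of_nonneg_left ih (rfac_nonneg lam n)) le_rfl
        _ ≤ G lam (n + 1) * Sig lam y n +
            G lam (n + 1) *
            (((n : ℝ) + 2) / ‖lam * ((n : ℂ) + 2) - 1‖ * ‖y (n + 1)‖) := by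
            have e : rfac lam n * (G lam n * Sig lam y n) = G lam (n + 1) * Sig lam y n := by
              rw [G_succ]; ring
            rw [e]
            have ht : (0:ℝ) ≤ ((n : ℝ) + 2) / ‖lam * ((n : ℂ) + 2) - 1‖ *
                ‖y (n + 1)‖ := by positivity
            nlinarith
        _ = G lam (n + 1) * Sig lam y (n + 1) := by
            rw [Sig_succ]; ring

lemma Tr_bound (lam : ℂ) (y : ℕ → ℂ) (n : ℕ) :
    ‖Tr lam y n‖ ≤ 2 * G lam n * Sig lam y n := by
  cases n with
  | zero =>
      have := S_bound lam y 0
      have h0 : (0:ℝ) ≤ G lam 0 * Sig lam y 0 :=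
        mul_nonneg (le_trans zero_le_one (one_le_G lam 0)) (Sig_nonneg lam y 0)
      calc ‖Tr lam y 0‖ = ‖S lam y 0‖ := rfl
        _ ≤ G lam 0 * Sig lam y 0 := this
        _ ≤ 2 * G lam 0 * Sig lam y 0 := by nlinarith
  | succ n =>
      have h1 := S_bound lam y (n + 1)
      have h2 := S_bound lam y n
      have hGm := G_mono lam n
      have hSm := Sig_mono lam y n
      have hGnn : (0:ℝ) ≤ G lam n := le_trans zero_le_one (one_le_G lam n)
      have hGnn1 : (0:ℝ) ≤ G lam (n + 1) := le_trans zero_le_one (one_le_G lam (n + 1))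
      have hSnn : (0:ℝ) ≤ Sig lam y n := Sig_nonneg lam y n
      have hSnn1 : (0:ℝ) ≤ Sig lam y (n + 1) := Sig_nonneg lam y (n + 1)
      calc ‖Tr lam y (n + 1)‖ = ‖S lam y (n + 1) - S lam y n‖ := rfl
        _ ≤ ‖S lam y (n + 1)‖ + ‖S lam y n‖ := by
            simpa [sub_eq_add_neg] using norm_add_le (S lam y (n + 1)) (-(S lam y n))
        _ ≤ G lam (n + 1) * Sig lam y (n + 1) + G lam n * Sig lam y n := add_le_add h1 h2
        _ ≤ 2 * G lam (n + 1) * Sig lam y (n + 1) := by nlinarith [mul_le_mul hGm hSm hSnn hGnn1]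

/-! #### Bounds on the constants -/

lemma one_div_one_sub_aux {u : ℝ} (hu : 2 ≤ u) : u / (u - 1) ≤ Real.exp (2 * (1 / u)) := by
  have hu0 : 0 < u := by linarith
  have h1 : 2 * (1 / u) + 1 ≤ Real.exp (2 * (1 / u)) := Real.add_one_le_exp _
  have h2 : u / (u - 1) ≤ 2 * (1 / u) + 1 := by
    rw [div_le_iff₀ (by linarith : (0:ℝ) < u - 1)]
    have e : 1 / u * u = 1 := by field_simp
    nlinarith
  linarith

lemma harm_le_log : ∀ n : ℕ, (∑ j ∈ range n, 1 / ((j : ℝ) + 2)) ≤ Real.log ((n : ℝ) + 1)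
  | 0 => by simp
  | n + 1 => by
      rw [sum_range_succ]
      have ih := harm_le_log n
      have key : 1 / ((n : ℝ) + 2) ≤ Real.log ((n : ℝ) + 2) - Real.log ((n : ℝ) + 1) := by
        have hp1 : (0:ℝ) < (n : ℝ) + 1 := by positivity
        have hp2 : (0:ℝ) < (n : ℝ) + 2 := by positivity
        have h := Real.log_le_sub_one_of_pos (show (0:ℝ) < ((n : ℝ) + 1) / ((n : ℝ) + 2) by
          positivity)
        rw [Real.log_div hp1.ne' hp2.ne'] at h
        have e : ((n : ℝ) + 1) / ((n : ℝ) + 2) - 1 = -(1 / ((n : ℝ) + 2)) := by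
          field_simp <;> ring
        rw [e] at h
        linarith
      rw [show (((n + 1 : ℕ)) : ℝ) + 1 = (n : ℝ) + 2 by push_cast; ring]
      linarith

lemma E_bound {lam : ℂ} (hs : ∀ n : ℕ, lam * ((n : ℂ) + 1) ≠ 1) :
    ∃ E : ℝ, 1 ≤ E ∧ ∀ i : ℕ, 1 / ‖lam * ((i : ℂ) + 1) - 1‖ ≤ E := by
  rcases eq_or_ne lam 0 with rfl | hlam
  · exact ⟨1, le_rfl, fun i => by simp⟩
  have hm : 0 < ‖lam‖ := norm_pos_iff.mpr hlam
  set m := ‖lam‖ with hmdef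
  set J : ℕ := ⌈2 / m⌉₊ with hJ
  refine ⟨1 + ∑ i ∈ range J, 1 / ‖lam * ((i : ℂ) + 1) - 1‖, ?_, fun i => ?_⟩
  · have : (0:ℝ) ≤ ∑ i ∈ range J, 1 / ‖lam * ((i : ℂ) + 1) - 1‖ :=
      Finset.sum_nonneg fun i _ => by positivity
    linarith
  · have hnonneg : (0:ℝ) ≤ ∑ i ∈ range J, 1 / ‖lam * ((i : ℂ) + 1) - 1‖ :=
      Finset.sum_nonneg fun i _ => by positivity
    rcases le_or_gt (2 / m) ((i : ℝ) + 1) with hcase | hcase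
    · have habs : ‖(i : ℂ) + 1‖ = (i : ℝ) + 1 := by
        rw [show ((i : ℂ) + 1) = (((i + 1 : ℕ)) : ℂ) by push_cast; ring, Complex.norm_natCast]
        push_cast; ring
      have h2 : 2 ≤ ‖lam * ((i : ℂ) + 1)‖ := by
        rw [norm_mul, habs]
        calc (2:ℝ) = m * (2 / m) := by field_simp
          _ ≤ m * ((i : ℝ) + 1) := mul_le_mul_of_nonneg_left hcase hm.le
      have h3 : 1 ≤ ‖lam * ((i : ℂ) + 1) - 1‖ := by
        have := norm_add_le (lam * ((i : ℂ) + 1) - 1) 1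
        simp only [sub_add_cancel, norm_one] at this
        linarith
      have : 1 / ‖lam * ((i : ℂ) + 1) - 1‖ ≤ 1 :=
        div_le_one_of_le₀ h3 (by positivity)
      linarith
    · have hiJ : i ∈ range J := by
        rw [mem_range, hJ]
        exact Nat.lt_ceil.mpr (by push_cast; linarith)
      have := Finset.single_le_sum (s := range J)
        (f := fun j : ℕ => 1 / ‖lam * ((j : ℂ) + 1) - 1‖)
        (fun j _ => by positivity) hiJ
      linarith

lemma G_bound {lam : ℂ} (hs : ∀ n : ℕ, lam * ((n : ℂ) + 1) ≠ 1) :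
    ∃ B β : ℝ, 1 ≤ B ∧ 0 ≤ β ∧
      ∀ n : ℕ, G lam n ≤ B * Real.exp (β * Real.log ((n : ℝ) + 1)) := by
  rcases eq_or_ne lam 0 with rfl | hlam
  · refine ⟨1, 0, le_rfl, le_rfl, fun n => ?_⟩
    have : G 0 n = 1 := by
      rw [G]
      refine Finset.prod_eq_one fun j _ => ?_
      rw [rfac]
      simp
    rw [this]
    simp
  have hm : 0 < ‖lam‖ := norm_pos_iff.mpr hlam
  set m := ‖lam‖ with hmdef
  set J : ℕ := ⌈2 / m⌉₊ with hJ
  set P : ℝ := G lam J with hP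
  have hP1 : 1 ≤ P := one_le_G lam J
  have key : ∀ n : ℕ, G lam n ≤ P * Real.exp ((2 / m) * ∑ j ∈ range n, 1 / ((j : ℝ) + 2)) := by
    intro n
    induction n with
    | zero => simpa [G] using hP1
    | succ n ih =>
        rcases le_or_gt J (n + 1) with hcase | hcase
        · -- the factor at step `n` satisfies the exponential bound
          have hn2 : 2 / m ≤ (n : ℝ) + 2 := by
            have : (J : ℝ) ≤ (n : ℝ) + 1 := by exact_mod_cast hcase
            have h2 := Nat.le_ceil (2 / m)
            rw [← hJ] at h2
            linarith
          have habsw : ‖lam * ((n : ℂ) + 2)‖ = m * ((n : ℝ) + 2) := by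
            rw [norm_mul, abs_coe_add_two]
          have hw2 : 2 ≤ m * ((n : ℝ) + 2) := by
            calc (2:ℝ) = m * (2 / m) := by field_simp
              _ ≤ m * ((n : ℝ) + 2) := mul_le_mul_of_nonneg_left hn2 hm.le
          have hfac : rfac lam n ≤ Real.exp ((2 / m) * (1 / ((n : ℝ) + 2))) := by
            have harg : (2 / m) * (1 / ((n : ℝ) + 2)) = 2 * (1 / (m * ((n : ℝ) + 2))) := by
              field_simp
            rw [rfac, max_le_iff]
            constructor
            · have hd := dne2 hs n
              have hdpos : 0 < ‖lam * ((n : ℂ) + 2) - 1‖ := norm_pos_iff.mpr hd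
              rw [norm_div, habsw]
              have hsub : m * ((n : ℝ) + 2) - 1 ≤ ‖lam * ((n : ℂ) + 2) - 1‖ := by
                have := norm_add_le (lam * ((n : ℂ) + 2) - 1) 1
                simp only [sub_add_cancel, norm_one] at this
                rw [habsw] at this
                linarith
              have hsubpos : (0:ℝ) < m * ((n : ℝ) + 2) - 1 := by linarith
              calc m * ((n : ℝ) + 2) / ‖lam * ((n : ℂ) + 2) - 1‖
                  ≤ m * ((n : ℝ) + 2) / (m * ((n : ℝ) + 2) - 1) :=
                    div_le_div_of_nonneg_left (by linarith) hsubpos hsub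
                _ ≤ Real.exp (2 * (1 / (m * ((n : ℝ) + 2)))) := one_div_one_sub_aux hw2
                _ = Real.exp ((2 / m) * (1 / ((n : ℝ) + 2))) := by rw [harg]
            · rw [harg]
              exact Real.one_le_exp (by positivity)
          calc G lam (n + 1) = G lam n * rfac lam n := G_succ lam n
            _ ≤ (P * Real.exp ((2 / m) * ∑ j ∈ range n, 1 / ((j : ℝ) + 2))) *
                Real.exp ((2 / m) * (1 / ((n : ℝ) + 2))) := by
                exact mul_le_mul ih hfac (le_trans zero_le_one (one_le_rfac lam n)) (by positivity)
            _ = P * Real.exp ((2 / m) * ∑ j ∈ range (n + 1), 1 / ((j : ℝ) + 2)) := by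
                rw [sum_range_succ, mul_add, Real.exp_add, mul_assoc]
        · have hsub : G lam (n + 1) ≤ P := G_le_G lam (le_of_lt hcase)
          calc G lam (n + 1) ≤ P := hsub
            _ ≤ P * Real.exp ((2 / m) * ∑ j ∈ range (n + 1), 1 / ((j : ℝ) + 2)) := by
                refine le_mul_of_one_le_right (by linarith) (Real.one_le_exp ?_)
                have : (0:ℝ) ≤ ∑ j ∈ range (n + 1), 1 / ((j : ℝ) + 2) :=
                  Finset.sum_nonneg fun j _ => by positivity
                positivity
  refine ⟨P, 2 / m, hP1, by positivity, fun n => ?_⟩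
  calc G lam n ≤ P * Real.exp ((2 / m) * ∑ j ∈ range n, 1 / ((j : ℝ) + 2)) := key n
    _ ≤ P * Real.exp ((2 / m) * Real.log ((n : ℝ) + 1)) := by
        refine mul_le_mul_of_nonneg_left (Real.exp_le_exp.mpr ?_) (by linarith)
        exact mul_le_mul_of_nonneg_left (harm_le_log n) (by positivity)

/-! #### The eigenvectors -/

lemma hockey (m : ℕ) : ∀ n : ℕ,
    ∑ i ∈ range (n + 1), Nat.choose i m = Nat.choose (n + 1) (m + 1)
  | 0 => by cases m <;> simp [Nat.choose_succ_succ]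
  | n + 1 => by
      rw [sum_range_succ, hockey m n, Nat.choose_succ_succ (n + 1) m]
      simp only [Nat.succ_eq_add_one]
      omega

end Stmt8Aux

open Stmt8Aux

section Main

variable {a : ℕ → ℝ}

lemma eigen_aux (h1 : ∀ n, 1 < a n) (hmono : StrictMono a)
    (htop : Tendsto a atTop atTop)
    (hnuc : Tendsto (fun n : ℕ => Real.log ((n : ℝ) + 1) / a n) atTop (𝓝 0))
    (m : ℕ) : IsEigen a (1 / ((m : ℂ) + 1)) := by
  refine ⟨fun n => ((Nat.choose n m : ℕ) : ℂ), ?_, ?_, ?_⟩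
  · intro k
    have hb : ∀ n : ℕ, wt a k n * ‖((Nat.choose n m : ℕ) : ℂ)‖ ≤
        Real.exp ((m : ℝ) * Real.log ((n : ℝ) + 1) - (1 / ((k : ℝ) + 1)) * a n) := by
      intro n
      rw [Complex.norm_natCast, wt]
      have hc : ((Nat.choose n m : ℕ) : ℝ) ≤ ((n : ℝ) + 1) ^ m := by
        have h1' : Nat.choose n m ≤ n ^ m := Nat.choose_le_pow n m
        have h2' : (n : ℝ) ^ m ≤ ((n : ℝ) + 1) ^ m :=
          pow_le_pow_left₀ (by positivity) (by linarith) m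
        calc ((Nat.choose n m : ℕ) : ℝ) ≤ ((n ^ m : ℕ) : ℝ) := by exact_mod_cast h1'
          _ = (n : ℝ) ^ m := by push_cast; ring
          _ ≤ ((n : ℝ) + 1) ^ m := h2'
      have hpow : ((n : ℝ) + 1) ^ m = Real.exp ((m : ℝ) * Real.log ((n : ℝ) + 1)) := by
        rw [Real.exp_nat_mul, Real.exp_log (by positivity)]
      calc Real.exp (-(a n) / ((k : ℝ) + 1)) * ((Nat.choose n m : ℕ) : ℝ)
          ≤ Real.exp (-(a n) / ((k : ℝ) + 1)) * ((n : ℝ) + 1) ^ m :=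
            mul_le_mul_of_nonneg_left hc (Real.exp_pos _).le
        _ = Real.exp ((m : ℝ) * Real.log ((n : ℝ) + 1) - (1 / ((k : ℝ) + 1)) * a n) := by
            rw [hpow, ← Real.exp_add]
            congr 1
            ring
    refine squeeze_zero (fun n => mul_nonneg (wt_pos a k n).le (norm_nonneg _)) hb ?_
    exact exp_term_tendsto h1 htop hnuc (m : ℝ) (1 / ((k : ℝ) + 1)) (by positivity)
  · intro h
    have := congrFun h m
    simp [Nat.choose_self] at this
  · funext n
    simp only [cesaro, Pi.smul_apply, smul_eq_mul]
    have hsum : ∑ i ∈ range (n + 1), ((Nat.choose i m : ℕ) : ℂ) =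
        ((Nat.choose (n + 1) (m + 1) : ℕ) : ℂ) := by
      rw [← Nat.cast_sum, hockey m n]
    rw [hsum]
    have key : ((n : ℂ) + 1) * ((Nat.choose n m : ℕ) : ℂ) =
        ((Nat.choose (n + 1) (m + 1) : ℕ) : ℂ) * ((m : ℂ) + 1) := by
      have := Nat.add_one_mul_choose_eq n m
      have h2 : ((Nat.succ n * Nat.choose n m : ℕ) : ℂ) =
          ((Nat.choose (Nat.succ n) (Nat.succ m) * Nat.succ m : ℕ) : ℂ) := by
        exact_mod_cast this
      push_cast at h2
      push_cast
      linear_combination h2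
    have hn : ((n : ℂ) + 1) ≠ 0 := Nat.cast_add_one_ne_zero n
    have hm : ((m : ℂ) + 1) ≠ 0 := Nat.cast_add_one_ne_zero m
    field_simp
    linear_combination -key

lemma inResolvent_of (hmono : StrictMono a) (h1 : ∀ n, 1 < a n)
    (htop : Tendsto a atTop atTop)
    (hnuc : Tendsto (fun n : ℕ => Real.log ((n : ℝ) + 1) / a n) atTop (𝓝 0))
    {lam : ℂ} (hs : ∀ n : ℕ, lam * ((n : ℂ) + 1) ≠ 1) :
    InResolvent a lam := by
  obtain ⟨E, hE1, hEb⟩ := E_bound hs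
  obtain ⟨B, β, hB1, hβ0, hGb⟩ := G_bound hs
  -- the master pointwise estimate
  have master : ∀ (y : ℕ → ℂ), memLambda a y → ∀ (k n : ℕ),
      wt a k n * ‖Tr lam y n‖ ≤
        (2 * E * B) *
          Real.exp ((β + 2) * Real.log ((n : ℝ) + 1) -
            (1 / ((k : ℝ) + 1) - 1 / ((k : ℝ) + 2)) * a n) * pk a (k + 1) y := by
    intro y hy k n
    have hpk0 : 0 ≤ pk a (k + 1) y := pk_nonneg hy (k + 1)
    have hterm : ∀ i ∈ range (n + 1),
        ((i : ℝ) + 1) / ‖lam * ((i : ℂ) + 1) - 1‖ * ‖y i‖ ≤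
          ((n : ℝ) + 1) * E * (Real.exp (a n / ((k : ℝ) + 1 + 1)) * pk a (k + 1) y) := by
      intro i hi
      have hin : i ≤ n := by
        have := mem_range.mp hi; omega
      have h1' : ((i : ℝ) + 1) / ‖lam * ((i : ℂ) + 1) - 1‖ ≤ ((n : ℝ) + 1) * E := by
        have e : ((i : ℝ) + 1) / ‖lam * ((i : ℂ) + 1) - 1‖ =
            ((i : ℝ) + 1) * (1 / ‖lam * ((i : ℂ) + 1) - 1‖) := by ring
        rw [e]
        have hi1 : ((i : ℝ) + 1) ≤ ((n : ℝ) + 1) := by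
          have : (i : ℝ) ≤ (n : ℝ) := by exact_mod_cast hin
          linarith
        exact mul_le_mul hi1 (hEb i) (by positivity) (by positivity)
      have h2' : ‖y i‖ ≤ Real.exp (a n / ((k : ℝ) + 1 + 1)) * pk a (k + 1) y := by
        have := abs_le_exp_mul_pk hy (k + 1) i
        have hai : a i ≤ a n := hmono.monotone hin
        have hcast : ((k + 1 : ℕ) : ℝ) + 1 = (k : ℝ) + 1 + 1 := by push_cast; ring
        rw [hcast] at this
        calc ‖y i‖ ≤ Real.exp (a i / ((k : ℝ) + 1 + 1)) * pk a (k + 1) y := this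
          _ ≤ Real.exp (a n / ((k : ℝ) + 1 + 1)) * pk a (k + 1) y := by
              refine mul_le_mul_of_nonneg_right (Real.exp_le_exp.mpr ?_) hpk0
              gcongr
      calc ((i : ℝ) + 1) / ‖lam * ((i : ℂ) + 1) - 1‖ * ‖y i‖
          ≤ (((n : ℝ) + 1) * E) * (Real.exp (a n / ((k : ℝ) + 1 + 1)) * pk a (k + 1) y) := by
            refine mul_le_mul h1' h2' (norm_nonneg _) (by positivity)
        _ = ((n : ℝ) + 1) * E * (Real.exp (a n / ((k : ℝ) + 1 + 1)) * pk a (k + 1) y) := by ring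
    have hSig : Sig lam y n ≤
        ((n : ℝ) + 1) * (((n : ℝ) + 1) * E * (Real.exp (a n / ((k : ℝ) + 1 + 1)) *
          pk a (k + 1) y)) := by
      have := Finset.sum_le_card_nsmul (range (n + 1)) _ _ hterm
      rw [card_range, nsmul_eq_mul] at this
      calc Sig lam y n ≤ ((n + 1 : ℕ) : ℝ) * (((n : ℝ) + 1) * E *
            (Real.exp (a n / ((k : ℝ) + 1 + 1)) * pk a (k + 1) y)) := this
        _ = ((n : ℝ) + 1) * (((n : ℝ) + 1) * E * (Real.exp (a n / ((k : ℝ) + 1 + 1)) *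
            pk a (k + 1) y)) := by push_cast; ring
    have hTr : ‖Tr lam y n‖ ≤
        2 * E * G lam n * (((n : ℝ) + 1) ^ 2 * Real.exp (a n / ((k : ℝ) + 1 + 1)) *
          pk a (k + 1) y) := by
      calc ‖Tr lam y n‖ ≤ 2 * G lam n * Sig lam y n := Tr_bound lam y n
        _ ≤ 2 * G lam n * (((n : ℝ) + 1) * (((n : ℝ) + 1) * E *
            (Real.exp (a n / ((k : ℝ) + 1 + 1)) * pk a (k + 1) y))) := by
            refine mul_le_mul_of_nonneg_left hSig ?_
            have := one_le_G lam n
            linarith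
        _ = 2 * E * G lam n * (((n : ℝ) + 1) ^ 2 * Real.exp (a n / ((k : ℝ) + 1 + 1)) *
            pk a (k + 1) y) := by ring
    have hGn : G lam n ≤ B * Real.exp (β * Real.log ((n : ℝ) + 1)) := hGb n
    have hwt : wt a k n = Real.exp (-(a n) / ((k : ℝ) + 1)) := rfl
    have hL : (0:ℝ) < (n : ℝ) + 1 := by positivity
    have hexp : Real.exp (β * Real.log ((n : ℝ) + 1)) * (((n : ℝ) + 1) ^ 2 *
          Real.exp (a n / ((k : ℝ) + 1 + 1))) * Real.exp (-(a n) / ((k : ℝ) + 1)) =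
        Real.exp ((β + 2) * Real.log ((n : ℝ) + 1) -
          (1 / ((k : ℝ) + 1) - 1 / ((k : ℝ) + 2)) * a n) := by
      have hp2 : ((n : ℝ) + 1) ^ 2 = Real.exp (2 * Real.log ((n : ℝ) + 1)) := by
        rw [show (2 : ℝ) * Real.log ((n : ℝ) + 1) = ((2 : ℕ) : ℝ) * Real.log ((n : ℝ) + 1) by
          norm_num, Real.exp_nat_mul, Real.exp_log hL]
      rw [hp2, ← Real.exp_add, ← Real.exp_add, ← Real.exp_add]
      congr 1
      have hk1 : ((k : ℝ) + 1) ≠ 0 := by positivity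
      have hk2 : ((k : ℝ) + 2) ≠ 0 := by positivity
      field_simp
      ring
    calc wt a k n * ‖Tr lam y n‖
        ≤ wt a k n * (2 * E * G lam n * (((n : ℝ) + 1) ^ 2 *
            Real.exp (a n / ((k : ℝ) + 1 + 1)) * pk a (k + 1) y)) :=
          mul_le_mul_of_nonneg_left hTr (wt_pos a k n).le
      _ ≤ wt a k n * (2 * E * (B * Real.exp (β * Real.log ((n : ℝ) + 1))) *
            (((n : ℝ) + 1) ^ 2 * Real.exp (a n / ((k : ℝ) + 1 + 1)) * pk a (k + 1) y)) := by
          refine mul_le_mul_of_nonneg_left ?_ (wt_pos a k n).le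
          have h2E : (0:ℝ) ≤ 2 * E := by linarith
          refine mul_le_mul_of_nonneg_right (mul_le_mul_of_nonneg_left hGn h2E) ?_
          positivity
      _ = (2 * E * B) * (Real.exp (β * Real.log ((n : ℝ) + 1)) * (((n : ℝ) + 1) ^ 2 *
            Real.exp (a n / ((k : ℝ) + 1 + 1))) * Real.exp (-(a n) / ((k : ℝ) + 1))) *
            pk a (k + 1) y := by
          rw [hwt]
          have : (k : ℝ) + 1 + 1 = (k : ℝ) + 2 := by ring
          ring
      _ = (2 * E * B) * Real.exp ((β + 2) * Real.log ((n : ℝ) + 1) -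
            (1 / ((k : ℝ) + 1) - 1 / ((k : ℝ) + 2)) * a n) * pk a (k + 1) y := by
          rw [show (k : ℝ) + 1 + 1 = (k : ℝ) + 2 by ring] at hexp ⊢
          rw [hexp]
  have heps : ∀ k : ℕ, (0:ℝ) < 1 / ((k : ℝ) + 1) - 1 / ((k : ℝ) + 2) := by
    intro k
    have hk1 : (0:ℝ) < (k : ℝ) + 1 := by positivity
    have hk2 : (0:ℝ) < (k : ℝ) + 2 := by positivity
    rw [sub_pos]
    exact one_div_lt_one_div_of_lt hk1 (by linarith)
  refine ⟨Tr lam, ?_, ?_, ?_, ?_, ?_, ?_⟩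
  · -- memLambda preserved
    intro y hy k
    refine squeeze_zero (fun n => mul_nonneg (wt_pos a k n).le (norm_nonneg _))
      (fun n => master y hy k n) ?_
    have h0 := exp_term_tendsto h1 htop hnuc (β + 2)
      (1 / ((k : ℝ) + 1) - 1 / ((k : ℝ) + 2)) (heps k)
    have := (h0.const_mul (2 * E * B)).mul_const (pk a (k + 1) y)
    simpa using this
  · intro x y _ _; exact Tr_add lam x y
  · intro c x _; exact Tr_smul lam c x
  · -- continuity estimate
    intro k
    obtain ⟨M0, hM01, hM0b⟩ := exp_term_bound h1 htop hnuc (β + 2)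
      (1 / ((k : ℝ) + 1) - 1 / ((k : ℝ) + 2)) (heps k)
    have hMpos : (0:ℝ) < 2 * E * B * M0 :=
      mul_pos (mul_pos (by linarith : (0:ℝ) < 2 * E) (by linarith : (0:ℝ) < B))
        (by linarith : (0:ℝ) < M0)
    refine ⟨k + 1, 2 * E * B * M0, hMpos, fun y hy => ?_⟩
    refine ciSup_le fun n => ?_
    have hpk0 : 0 ≤ pk a (k + 1) y := pk_nonneg hy (k + 1)
    calc wt a k n * ‖Tr lam y n‖
        ≤ (2 * E * B) * Real.exp ((β + 2) * Real.log ((n : ℝ) + 1) -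
            (1 / ((k : ℝ) + 1) - 1 / ((k : ℝ) + 2)) * a n) * pk a (k + 1) y := master y hy k n
      _ ≤ (2 * E * B) * M0 * pk a (k + 1) y := by
          refine mul_le_mul_of_nonneg_right ?_ hpk0
          refine mul_le_mul_of_nonneg_left (hM0b n) (by nlinarith : (0:ℝ) ≤ 2 * E * B)
      _ = 2 * E * B * M0 * pk a (k + 1) y := by ring
  · intro x _; exact Tr_left_inverse hs x
  · intro x _; exact Tr_right_inverse hs x

lemma eigen_not_res {lam : ℂ} (h : IsEigen a lam) : ¬ InResolvent a lam := by
  obtain ⟨x, hx, hx0, hcx⟩ := h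
  rintro ⟨T, _, _, hsmul, _, hinv, _⟩
  have hT0 : T 0 = 0 := by
    have := hsmul 0 x hx
    simpa using this
  have h0 : lam • x - cesaro x = 0 := by rw [hcx, sub_self]
  have := hinv x hx
  rw [h0, hT0] at this
  exact hx0 this.symm

end Main

/-- if `Λ₀(α)` is nuclear (i.e. `(log n)/α_n → 0`), then
`σ(C; Λ₀(α)) = σ_pt(C; Λ₀(α)) = Σ = {1/m : m ≥ 1}`. -/
theorem stmt8 (a : ℕ → ℝ) (hmono : StrictMono a) (h1 : ∀ n, 1 < a n)
    (htop : Tendsto a atTop atTop)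
    (hnuc : Tendsto (fun n : ℕ => Real.log ((n : ℝ) + 1) / a n) atTop (𝓝 0)) :
    {lam : ℂ | ¬ InResolvent a lam} = {lam : ℂ | ∃ m : ℕ, lam = 1 / ((m : ℂ) + 1)} ∧
    {lam : ℂ | IsEigen a lam} = {lam : ℂ | ∃ m : ℕ, lam = 1 / ((m : ℂ) + 1)} := by
  have hres : ∀ lam : ℂ, (∀ m : ℕ, lam ≠ 1 / ((m : ℂ) + 1)) → InResolvent a lam := by
    intro lam hne
    refine inResolvent_of hmono h1 htop hnuc fun n heq => ?_
    exact hne n ((eq_div_iff (Nat.cast_add_one_ne_zero n)).mpr heq)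
  constructor
  · ext lam
    simp only [Set.mem_setOf_eq]
    constructor
    · intro h
      by_contra hne
      push_neg at hne
      exact h (hres lam hne)
    · rintro ⟨m, rfl⟩
      exact eigen_not_res (eigen_aux h1 hmono htop hnuc m)
  · ext lam
    simp only [Set.mem_setOf_eq]
    constructor
    · intro h
      by_contra hne
      push_neg at hne
      exact eigen_not_res h (hres lam hne)
    · rintro ⟨m, rfl⟩
      exact eigen_aux h1 hmono htop hnuc m

end
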